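/- Let s : {1,…,m} → ℕ be a nonincreasing sequence of positive integers, and consider the 2m-element multiset {s(1),…,s(m)} ∪ {2s(1),…,2s(m)}. For every K with 1 ≤ K ≤ 2m, the K-th largest element (with multiplicity) of this multiset equals the maximum over all pairs (a,b) of nonnegative integers with a + b = K, a ≤ m, b ≤ m, of φ(a,b), where φ(a,0) = s(a), φ(0,b) = 2·s(b), and φ(a,b) = min(s(a), 2·s(b)) when a ≥ 1 and b ≥ 1. -/

import Mathlib

open Matrix

noncomputable section

abbrev F2 : Type := ZMod 2

/-- The Arikan kernel `T₂ = ((1,0),(1,1))` over `F₂`. -/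
def T2 : Matrix (Fin 2) (Fin 2) F2 := !![1, 0; 1, 1]

/-- Kronecker product of `Fin`-indexed square matrices, with the standard index
convention `(A ⊗ B) i j = A (i / n) (j / n) * B (i % n) (j % n)`. -/
def kron {m n : ℕ} (A : Matrix (Fin m) (Fin m) F2) (B : Matrix (Fin n) (Fin n) F2) :
    Matrix (Fin (m * n)) (Fin (m * n)) F2 :=
  fun i j => A i.divNat j.divNat * B i.modNat j.modNat

/-- The `n`-fold Kronecker power of `T₂` (with `T₂^{⊗0}` the 1×1 identity). -/
def T2pow : (n : ℕ) → Matrix (Fin (2 ^ n)) (Fin (2 ^ n)) F2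
  | 0 => 1
  | n + 1 => (kron T2 (T2pow n)).submatrix
      (Fin.cast (by rw [pow_succ, Nat.mul_comm]))
      (Fin.cast (by rw [pow_succ, Nat.mul_comm]))

/-- Minimum distance `d_G(I)`: the minimum Hamming weight of `u · G` over all
nonzero row vectors `u` with support contained in `I`. -/
def minDist {N : ℕ} (G : Matrix (Fin N) (Fin N) F2) (I : Finset (Fin N)) : ℕ :=
  sInf {w | ∃ u : Fin N → F2, u ≠ 0 ∧ (∀ i, u i ≠ 0 → i ∈ I) ∧
    hammingNorm (Matrix.vecMul u G) = w}

/-- Minimum-distance spectrum `S_G(K)`: the maximum of `d_G(I)` over all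
row-index sets `I` of size `K`. -/
def spec {N : ℕ} (G : Matrix (Fin N) (Fin N) F2) (K : ℕ) : ℕ :=
  sSup {d | ∃ I : Finset (Fin N), I.card = K ∧ minDist G I = d}

/-- `K`-th largest element (1-indexed, counted with multiplicity) of a
multiset of natural numbers. -/
def kthLargest (s : Multiset ℕ) (K : ℕ) : ℕ :=
  ((s.sort (· ≤ ·)).reverse).getD (K - 1) 0

/-- The quantity φ(a,b) from the max–min recursion:
`φ(a,0) = S(a)`, `φ(0,b) = 2·S(b)`, and `φ(a,b) = min(S(a), 2·S(b))` for `a,b ≥ 1`. -/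
def phi (S : ℕ → ℕ) (a b : ℕ) : ℕ :=
  if a = 0 then 2 * S b else if b = 0 then S a else min (S a) (2 * S b)



section Aux

/-- For a sorted (ascending) list, `v ≤ l[k]` iff at least `length - k` elements are `≥ v`. -/
lemma sorted_le_getElem_iff {l : List ℕ} (hs : l.Pairwise (· ≤ ·)) {k : ℕ} (hk : k < l.length)
    (v : ℕ) :
    v ≤ l[k] ↔ l.length - k ≤ l.countP (fun x => decide (v ≤ x)) := by
  constructor
  · intro h
    have h1 : l.countP (fun x => decide (v ≤ x)) =
        (l.take k).countP (fun x => decide (v ≤ x)) +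
          (l.drop k).countP (fun x => decide (v ≤ x)) := by
      rw [← List.countP_append, List.take_append_drop]
    have h2 : (l.drop k).countP (fun x => decide (v ≤ x)) = (l.drop k).length := by
      rw [List.countP_eq_length]
      intro x hx
      obtain ⟨j, hj, rfl⟩ := List.mem_iff_getElem.mp hx
      rw [List.getElem_drop]
      have hkj : k + j < l.length := by
        have := hj; rw [List.length_drop] at this; omega
      have : l[k] ≤ l[k + j] := by
        have := hs.rel_get_of_le (a := ⟨k, hk⟩) (b := ⟨k + j, hkj⟩) (by simp)
        simpa using this
      simpa using le_trans h this
    have h3 : (l.drop k).length = l.length - k := List.length_drop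
    omega
  · intro hcount
    by_contra hv
    push_neg at hv
    have h1 : l.countP (fun x => decide (v ≤ x)) =
        (l.take (k + 1)).countP (fun x => decide (v ≤ x)) +
          (l.drop (k + 1)).countP (fun x => decide (v ≤ x)) := by
      rw [← List.countP_append, List.take_append_drop]
    have h2 : (l.take (k + 1)).countP (fun x => decide (v ≤ x)) = 0 := by
      rw [List.countP_eq_zero]
      intro x hx
      obtain ⟨j, hj, rfl⟩ := List.mem_iff_getElem.mp hx
      rw [List.getElem_take]
      have hjk : j ≤ k := by
        have := hj; rw [List.length_take] at this; omega
      have hjl : j < l.length := by omega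
      have : l[j] ≤ l[k] := by
        have := hs.rel_get_of_le (a := ⟨j, hjl⟩) (b := ⟨k, hk⟩) (by simp [hjk])
        simpa using this
      simp only [decide_eq_true_eq]
      omega
    have h3 := List.countP_le_length (p := fun x => decide (v ≤ x)) (l := l.drop (k + 1))
    have h4 : (l.drop (k + 1)).length = l.length - (k + 1) := List.length_drop
    omega

/-- Characterization of the `K`-th largest element via counting. -/
lemma le_kthLargest_iff (M : Multiset ℕ) (K : ℕ) (hK1 : 1 ≤ K) (hK2 : K ≤ Multiset.card M)
    (v : ℕ) :
    v ≤ kthLargest M K ↔ K ≤ Multiset.countP (fun x => v ≤ x) M := by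
  classical
  set l := M.sort (· ≤ ·) with hl
  have hlen : l.length = Multiset.card M := Multiset.length_sort _
  have hsort : l.Pairwise (· ≤ ·) := Multiset.pairwise_sort _ _
  have hrev : K - 1 < l.reverse.length := by rw [List.length_reverse]; omega
  have hk : l.length - K < l.length := by omega
  have hval : kthLargest M K = l[l.length - K] := by
    rw [kthLargest, ← hl, List.getD_eq_getElem _ _ hrev, List.getElem_reverse]
    congr 1
    omega
  have hcnt : Multiset.countP (fun x => v ≤ x) M = l.countP (fun x => decide (v ≤ x)) := by
    conv_lhs => rw [← Multiset.sort_eq M (· ≤ ·), ← hl]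
    exact Multiset.coe_countP _ _
  rw [hval, hcnt, sorted_le_getElem_iff hsort hk]
  have : l.length - (l.length - K) = K := by omega
  rw [this]

lemma cnt_lower {m : ℕ} {t : ℕ → ℕ} (hanti : ∀ j k, 1 ≤ j → j ≤ k → k ≤ m → t k ≤ t j)
    {v a : ℕ} (ham : a ≤ m) (hv : v ≤ t a) :
    a ≤ ((Finset.range m).filter (fun i => v ≤ t (i + 1))).card := by
  classical
  have hsub : Finset.range a ⊆ (Finset.range m).filter (fun i => v ≤ t (i + 1)) := by
    intro i hi
    rw [Finset.mem_range] at hi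
    rw [Finset.mem_filter, Finset.mem_range]
    exact ⟨by omega, le_trans hv (hanti (i + 1) a (by omega) (by omega) ham)⟩
  have := Finset.card_le_card hsub
  simpa using this

lemma cnt_upper {m : ℕ} {t : ℕ → ℕ} (hanti : ∀ j k, 1 ≤ j → j ≤ k → k ≤ m → t k ≤ t j)
    {v j : ℕ} (hj1 : 1 ≤ j)
    (hja : j ≤ ((Finset.range m).filter (fun i => v ≤ t (i + 1))).card) : v ≤ t j := by
  classical
  by_contra hv
  push_neg at hv
  have hsub : (Finset.range m).filter (fun i => v ≤ t (i + 1)) ⊆ Finset.range (j - 1) := by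
    intro i hi
    rw [Finset.mem_filter, Finset.mem_range] at hi
    rw [Finset.mem_range]
    by_contra hij
    push_neg at hij
    have hji : j ≤ i + 1 := by omega
    have := hanti j (i + 1) hj1 hji (by omega)
    omega
  have := Finset.card_le_card hsub
  rw [Finset.card_range] at this
  omega

end Aux

theorem kthLargest_merge_doubled_antitone
    (m : ℕ) (s : ℕ → ℕ)
    (hpos : ∀ k, 1 ≤ k → k ≤ m → 1 ≤ s k)
    (hanti : ∀ j k, 1 ≤ j → j ≤ k → k ≤ m → s k ≤ s j)
    (K : ℕ) (hK1 : 1 ≤ K) (hK2 : K ≤ 2 * m) :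
    kthLargest
        ((Multiset.range m).map (fun i => s (i + 1)) +
          (Multiset.range m).map (fun i => 2 * s (i + 1))) K =
      sSup {d | ∃ a b : ℕ, a + b = K ∧ a ≤ m ∧ b ≤ m ∧ d = phi s a b} := by
  classical
  set M := (Multiset.range m).map (fun i => s (i + 1)) +
      (Multiset.range m).map (fun i => 2 * s (i + 1)) with hM
  have hcard : Multiset.card M = m + m := by simp [hM]
  have hanti2 : ∀ j k, 1 ≤ j → j ≤ k → k ≤ m → 2 * s k ≤ 2 * s j := by
    intro j k h1 h2 h3
    have := hanti j k h1 h2 h3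
    omega
  set A := fun v : ℕ => ((Finset.range m).filter (fun i => v ≤ s (i + 1))).card with hA
  set B := fun v : ℕ => ((Finset.range m).filter (fun i => v ≤ 2 * s (i + 1))).card with hB
  have hdecomp : ∀ v : ℕ, Multiset.countP (fun x => v ≤ x) M = A v + B v := by
    intro v
    rw [hM, Multiset.countP_add, Multiset.countP_map, Multiset.countP_map, hA, hB]
    simp [Finset.card, Finset.filter_val, Finset.range_val]
  have hchar : ∀ v : ℕ, v ≤ kthLargest M K ↔ K ≤ A v + B v := by
    intro v
    rw [le_kthLargest_iff M K hK1 (by omega), hdecomp v]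
  set L := kthLargest M K with hL
  have hub : ∀ a b : ℕ, a + b = K → a ≤ m → b ≤ m → phi s a b ≤ L := by
    intro a b hab ham hbm
    apply (hchar (phi s a b)).mpr
    by_cases ha : a = 0
    · subst ha
      have hphi : phi s 0 b = 2 * s b := by simp [phi]
      have hBb : b ≤ B (phi s 0 b) := by
        rw [hphi]
        exact cnt_lower hanti2 hbm le_rfl
      omega
    · by_cases hb : b = 0
      · subst hb
        have hphi : phi s a 0 = s a := by simp [phi, ha]
        have hAa : a ≤ A (phi s a 0) := by
          rw [hphi]
          exact cnt_lower hanti ham le_rfl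
        omega
      · have hphi : phi s a b = min (s a) (2 * s b) := by simp [phi, ha, hb]
        have hAa : a ≤ A (phi s a b) := by
          rw [hphi]
          exact cnt_lower hanti ham (min_le_left _ _)
        have hBb : b ≤ B (phi s a b) := by
          rw [hphi]
          exact cnt_lower hanti2 hbm (min_le_right _ _)
        omega
  have hself : K ≤ A L + B L := (hchar L).mp le_rfl
  have hAle : A L ≤ m := by
    have := Finset.card_filter_le (Finset.range m) (fun i => L ≤ s (i + 1))
    simpa [hA] using this
  have hBle : B L ≤ m := by
    have := Finset.card_filter_le (Finset.range m) (fun i => L ≤ 2 * s (i + 1))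
    simpa [hB] using this
  have hmem : L ∈ {d | ∃ a b : ℕ, a + b = K ∧ a ≤ m ∧ b ≤ m ∧ d = phi s a b} := by
    by_cases hKa : K ≤ A L
    · have hLle : L ≤ s K := cnt_upper hanti hK1 hKa
      have hKm : K ≤ m := le_trans hKa hAle
      have hphi : phi s K 0 = s K := by
        rw [phi, if_neg (by omega : ¬ K = 0), if_pos rfl]
      have hge : phi s K 0 ≤ L := hub K 0 (by omega) hKm (by omega)
      exact ⟨K, 0, by omega, hKm, by omega, by rw [hphi] at hge ⊢; omega⟩
    · push_neg at hKa
      have hb1 : 1 ≤ K - A L := by omega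
      have hbB : K - A L ≤ B L := by omega
      have hLb : L ≤ 2 * s (K - A L) := cnt_upper hanti2 hb1 hbB
      have hbm : K - A L ≤ m := le_trans hbB hBle
      by_cases ha0 : A L = 0
      · have hKm : K ≤ m := by omega
        have hphi : phi s 0 K = 2 * s K := by simp [phi]
        have hge : phi s 0 K ≤ L := hub 0 K (by omega) (by omega) hKm
        refine ⟨0, K, by omega, by omega, hKm, ?_⟩
        rw [hphi] at hge ⊢
        rw [ha0] at hLb
        simp at hLb ⊢
        omega
      · have hLa : L ≤ s (A L) := cnt_upper hanti (by omega) le_rfl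
        have hphi : phi s (A L) (K - A L) = min (s (A L)) (2 * s (K - A L)) := by
          rw [phi, if_neg ha0, if_neg (by omega : ¬ K - A L = 0)]
        have hge : phi s (A L) (K - A L) ≤ L := hub (A L) (K - A L) (by omega) hAle hbm
        refine ⟨A L, K - A L, by omega, hAle, hbm, ?_⟩
        rw [hphi] at hge ⊢
        have : L ≤ min (s (A L)) (2 * s (K - A L)) := le_min hLa hLb
        omega
  have hubS : ∀ d ∈ {d | ∃ a b : ℕ, a + b = K ∧ a ≤ m ∧ b ≤ m ∧ d = phi s a b}, d ≤ L := by
    rintro d ⟨a, b, hab, ham, hbm, rfl⟩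
    exact hub a b hab ham hbm
  exact le_antisymm (le_csSup ⟨L, hubS⟩ hmem) (csSup_le ⟨L, hmem⟩ hubS)
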